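/- Subsumption internalisation: a SHIQ concept D subsumes C with respect to terminology T and role hierarchy R if and only if C ⊓ ¬D ⊓ C_T ⊓ ∀U.C_T is unsatisfiable with respect to R_U. -/

import Mathlib

namespace SHIQ

/-- Roles: role names and their inverses. -/
inductive SRole (Rn : Type) : Type where
  | name : Rn → SRole Rn
  | inv  : Rn → SRole Rn

/-- The function `Inv` on roles. -/
def SRole.Inv {Rn : Type} : SRole Rn → SRole Rn
  | .name r => .inv r
  | .inv r  => .name r

/-- The underlying role name of a (possibly inverse) role. -/
def SRole.base {Rn : Type} : SRole Rn → Rn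
  | .name r => r
  | .inv r  => r

/-- SHIQ concepts over concept names `Cn` and role names `Rn`. -/
inductive Concept (Cn Rn : Type) : Type where
  | atom : Cn → Concept Cn Rn
  | conj : Concept Cn Rn → Concept Cn Rn → Concept Cn Rn
  | disj : Concept Cn Rn → Concept Cn Rn → Concept Cn Rn
  | neg  : Concept Cn Rn → Concept Cn Rn
  | ex   : SRole Rn → Concept Cn Rn → Concept Cn Rn
  | all  : SRole Rn → Concept Cn Rn → Concept Cn Rn
  | atLeast : ℕ → SRole Rn → Concept Cn Rn → Concept Cn Rn
  | atMost  : ℕ → SRole Rn → Concept Cn Rn → Concept Cn Rn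

/-- An interpretation `I = (Δ, ·^I)`. -/
structure Interp (Cn Rn : Type) where
  Dom : Type
  dom_nonempty : Nonempty Dom
  cI : Cn → Set Dom
  rI : Rn → Set (Dom × Dom)

/-- Interpretation of (possibly inverse) roles. -/
def Interp.roleI {Cn Rn : Type} (I : Interp Cn Rn) : SRole Rn → Set (I.Dom × I.Dom)
  | .name r => I.rI r
  | .inv r  => {p | (p.2, p.1) ∈ I.rI r}

/-- Extension of a concept in an interpretation. -/
def Interp.conceptI {Cn Rn : Type} (I : Interp Cn Rn) : Concept Cn Rn → Set I.Dom
  | .atom a => I.cI a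
  | .conj c d => I.conceptI c ∩ I.conceptI d
  | .disj c d => I.conceptI c ∪ I.conceptI d
  | .neg c => (I.conceptI c)ᶜ
  | .ex S c => {x | ∃ y, (x, y) ∈ I.roleI S ∧ y ∈ I.conceptI c}
  | .all S c => {x | ∀ y, (x, y) ∈ I.roleI S → y ∈ I.conceptI c}
  | .atLeast n S c => {x | (n : ℕ∞) ≤ {y | (x, y) ∈ I.roleI S ∧ y ∈ I.conceptI c}.encard}
  | .atMost n S c => {x | {y | (x, y) ∈ I.roleI S ∧ y ∈ I.conceptI c}.encard ≤ (n : ℕ∞)}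

/-- `I` interprets each transitive role name in `Rp` as a transitive relation. -/
def Interp.respectsTrans {Cn Rn : Type} (I : Interp Cn Rn) (Rp : Set Rn) : Prop :=
  ∀ r ∈ Rp, ∀ x y z : I.Dom, (x, y) ∈ I.rI r → (y, z) ∈ I.rI r → (x, z) ∈ I.rI r

/-- A role hierarchy: a set of role inclusion axioms `R ⊑ S`. -/
abbrev RoleHierarchy (Rn : Type) := Set (SRole Rn × SRole Rn)

/-- `I` satisfies the role hierarchy `H`. -/
def Interp.modelsH {Cn Rn : Type} (I : Interp Cn Rn) (H : RoleHierarchy Rn) : Prop :=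
  ∀ p ∈ H, I.roleI p.1 ⊆ I.roleI p.2

/-- The relation `⊑*`: transitive-reflexive closure of `⊑` over `H` together with
the inverse axioms `Inv(R) ⊑ Inv(S)`. -/
def subRole {Rn : Type} (H : RoleHierarchy Rn) : SRole Rn → SRole Rn → Prop :=
  Relation.ReflTransGen (fun R S => (R, S) ∈ H ∨ (R.Inv, S.Inv) ∈ H)

/-- A terminology: a finite list of GCIs `C ⊑ D`. -/
abbrev Terminology (Cn Rn : Type) := List (Concept Cn Rn × Concept Cn Rn)

/-- `I` satisfies the terminology `T`. -/
def Interp.modelsT {Cn Rn : Type} (I : Interp Cn Rn) (T : Terminology Cn Rn) : Prop :=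
  ∀ p ∈ T, I.conceptI p.1 ⊆ I.conceptI p.2

/-- The set of roles occurring in a concept. -/
def Concept.rolesOf {Cn Rn : Type} : Concept Cn Rn → Set (SRole Rn)
  | .atom _ => ∅
  | .conj c d => c.rolesOf ∪ d.rolesOf
  | .disj c d => c.rolesOf ∪ d.rolesOf
  | .neg c => c.rolesOf
  | .ex S c => insert S c.rolesOf
  | .all S c => insert S c.rolesOf
  | .atLeast _ S c => insert S c.rolesOf
  | .atMost _ S c => insert S c.rolesOf

/-- The set of roles occurring in a terminology. -/
def Terminology.rolesOf {Cn Rn : Type} (T : Terminology Cn Rn) : Set (SRole Rn) :=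
  {S | ∃ p ∈ T, S ∈ p.1.rolesOf ∪ p.2.rolesOf}

/-- The set of roles occurring in a role hierarchy. -/
def RoleHierarchy.rolesOf {Rn : Type} (H : RoleHierarchy Rn) : Set (SRole Rn) :=
  {S | ∃ p ∈ H, S = p.1 ∨ S = p.2}

/-- The concept `¬C ⊔ D` corresponding to a GCI `C ⊑ D`. -/
def gciConcept {Cn Rn : Type} (p : Concept Cn Rn × Concept Cn Rn) : Concept Cn Rn :=
  .disj (.neg p.1) p.2

/-- `C_T`: the conjunction of `¬C_i ⊔ D_i` over all GCIs `C_i ⊑ D_i` of `T`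
(for the empty terminology we take the tautology `A ⊔ ¬A`). -/
def CT {Cn Rn : Type} (a : Cn) : Terminology Cn Rn → Concept Cn Rn
  | [] => .disj (.atom a) (.neg (.atom a))
  | [p] => gciConcept p
  | p :: q :: T => .conj (gciConcept p) (CT a (q :: T))

/-- `R_U`: the role hierarchy `H` extended by `R ⊑ U` and `Inv(R) ⊑ U` for every
role `R` in the given set of roles. -/
def addU {Rn : Type} (H : RoleHierarchy Rn) (roles : Set (SRole Rn)) (u : Rn) :
    RoleHierarchy Rn :=
  H ∪ {p | ∃ S ∈ roles, p = (S, SRole.name u) ∨ p = (S.Inv, SRole.name u)}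

/-! ### Auxiliary lemmas -/

lemma mem_gci {Cn Rn : Type} (I : Interp Cn Rn) (p : Concept Cn Rn × Concept Cn Rn)
    (y : I.Dom) :
    y ∈ I.conceptI (gciConcept p) ↔ (y ∈ I.conceptI p.1 → y ∈ I.conceptI p.2) := by
  simp only [gciConcept, Interp.conceptI, Set.mem_union, Set.mem_compl_iff]
  tauto

lemma mem_CT {Cn Rn : Type} (I : Interp Cn Rn) (a : Cn) (T : Terminology Cn Rn)
    (y : I.Dom) :
    y ∈ I.conceptI (CT a T) ↔ ∀ p ∈ T, y ∈ I.conceptI (gciConcept p) := by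
  induction T with
  | nil =>
    simp only [CT, Interp.conceptI, Set.mem_union, Set.mem_compl_iff, List.not_mem_nil,
      false_implies, implies_true, iff_true]
    exact em _
  | cons p T ih =>
    cases T with
    | nil => simp [CT]
    | cons q T' =>
      show y ∈ I.conceptI (.conj (gciConcept p) (CT a (q :: T'))) ↔ _
      simp only [Interp.conceptI, Set.mem_inter_iff, ih, List.mem_cons]
      constructor
      · rintro ⟨h1, h2⟩ r (rfl | hr)
        · exact h1
        · exact h2 r hr
      · intro h
        exact ⟨h p (Or.inl rfl), fun r hr => h r (Or.inr hr)⟩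

lemma rolesOf_gci {Cn Rn : Type} (p : Concept Cn Rn × Concept Cn Rn) :
    (gciConcept p).rolesOf = p.1.rolesOf ∪ p.2.rolesOf := rfl

lemma rolesOf_CT {Cn Rn : Type} (a : Cn) (T : Terminology Cn Rn) :
    (CT a T : Concept Cn Rn).rolesOf ⊆ Terminology.rolesOf T := by
  induction T with
  | nil =>
    intro S hS
    simp [CT, Concept.rolesOf] at hS
  | cons p T ih =>
    cases T with
    | nil =>
      intro S hS
      rw [show CT a [p] = gciConcept p from rfl, rolesOf_gci] at hS
      exact ⟨p, List.mem_singleton_self p, hS⟩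
    | cons q T' =>
      intro S hS
      rcases hS with h | h
      · exact ⟨p, List.mem_cons_self, h⟩
      · obtain ⟨r, hr, hSr⟩ := ih h
        exact ⟨r, List.mem_cons_of_mem p hr, hSr⟩

lemma roleI_override {Cn Rn : Type} (I : Interp Cn Rn) (f : Rn → Set (I.Dom × I.Dom))
    (S : SRole Rn) (h : f S.base = I.rI S.base) :
    ({ I with rI := f } : Interp Cn Rn).roleI S = I.roleI S := by
  cases S <;> simp only [Interp.roleI, SRole.base] at h ⊢ <;> rw [h]

lemma conceptI_override {Cn Rn : Type} (I : Interp Cn Rn) (f : Rn → Set (I.Dom × I.Dom))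
    (C : Concept Cn Rn) (h : ∀ S ∈ C.rolesOf, f S.base = I.rI S.base) :
    ({ I with rI := f } : Interp Cn Rn).conceptI C = I.conceptI C := by
  induction C with
  | atom a => rfl
  | conj c d ihc ihd =>
    simp only [Interp.conceptI]
    rw [ihc (fun S hS => h S (Or.inl hS)), ihd (fun S hS => h S (Or.inr hS))]
  | disj c d ihc ihd =>
    simp only [Interp.conceptI]
    rw [ihc (fun S hS => h S (Or.inl hS)), ihd (fun S hS => h S (Or.inr hS))]
  | neg c ihc =>
    simp only [Interp.conceptI]
    rw [ihc h]
  | ex S c ihc =>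
    simp only [Interp.conceptI]
    rw [roleI_override I f S (h S (Set.mem_insert _ _)),
      ihc (fun S' hS' => h S' (Set.mem_insert_of_mem _ hS'))]
  | all S c ihc =>
    simp only [Interp.conceptI]
    rw [roleI_override I f S (h S (Set.mem_insert _ _)),
      ihc (fun S' hS' => h S' (Set.mem_insert_of_mem _ hS'))]
  | atLeast n S c ihc =>
    simp only [Interp.conceptI]
    rw [roleI_override I f S (h S (Set.mem_insert _ _)),
      ihc (fun S' hS' => h S' (Set.mem_insert_of_mem _ hS'))]
  | atMost n S c ihc =>
    simp only [Interp.conceptI]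
    rw [roleI_override I f S (h S (Set.mem_insert _ _)),
      ihc (fun S' hS' => h S' (Set.mem_insert_of_mem _ hS'))]

/-- The sub-interpretation of `I` induced by a nonempty subset `D` of the domain. -/
def Interp.restrict {Cn Rn : Type} (I : Interp Cn Rn) (D : Set I.Dom) (hD : D.Nonempty) :
    Interp Cn Rn where
  Dom := ↥D
  dom_nonempty := hD.to_subtype
  cI a := {y | (y : I.Dom) ∈ I.cI a}
  rI r := {p | ((p.1 : I.Dom), (p.2 : I.Dom)) ∈ I.rI r}

lemma restrict_roleI {Cn Rn : Type} (I : Interp Cn Rn) (D : Set I.Dom) (hD : D.Nonempty)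
    (S : SRole Rn) (p : ↥D × ↥D) :
    p ∈ (I.restrict D hD).roleI S ↔ ((p.1 : I.Dom), (p.2 : I.Dom)) ∈ I.roleI S := by
  cases S <;> rfl

lemma restrict_conceptI {Cn Rn : Type} (I : Interp Cn Rn) (D : Set I.Dom)
    (hD : D.Nonempty) (C : Concept Cn Rn)
    (hcl : ∀ S ∈ C.rolesOf, ∀ y ∈ D, ∀ z, (y, z) ∈ I.roleI S → z ∈ D)
    (y : ↥D) :
    y ∈ (I.restrict D hD).conceptI C ↔ (y : I.Dom) ∈ I.conceptI C := by
  induction C generalizing y with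
  | atom a => exact Iff.rfl
  | conj c d ihc ihd =>
    simp only [Interp.conceptI, Set.mem_inter_iff]
    exact and_congr (ihc (fun S hS => hcl S (Or.inl hS)) y) (ihd (fun S hS => hcl S (Or.inr hS)) y)
  | disj c d ihc ihd =>
    simp only [Interp.conceptI, Set.mem_union]
    exact or_congr (ihc (fun S hS => hcl S (Or.inl hS)) y) (ihd (fun S hS => hcl S (Or.inr hS)) y)
  | neg c ihc =>
    simp only [Interp.conceptI, Set.mem_compl_iff]
    exact not_congr (ihc hcl y)
  | ex S c ihc =>
    simp only [Interp.conceptI, Set.mem_setOf_eq]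
    constructor
    · rintro ⟨z, hr, hz⟩
      exact ⟨z.val, (restrict_roleI I D hD S (y, z)).1 hr,
        (ihc (fun S' hS' => hcl S' (Set.mem_insert_of_mem _ hS')) z).1 hz⟩
    · rintro ⟨z, hr, hz⟩
      have hzD : z ∈ D := hcl S (Set.mem_insert _ _) (y : I.Dom) y.2 z hr
      exact ⟨⟨z, hzD⟩, (restrict_roleI I D hD S (y, ⟨z, hzD⟩)).2 hr,
        (ihc (fun S' hS' => hcl S' (Set.mem_insert_of_mem _ hS')) ⟨z, hzD⟩).2 hz⟩
  | all S c ihc =>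
    simp only [Interp.conceptI, Set.mem_setOf_eq]
    constructor
    · intro h z hz
      have hzD : z ∈ D := hcl S (Set.mem_insert _ _) (y : I.Dom) y.2 z hz
      exact (ihc (fun S' hS' => hcl S' (Set.mem_insert_of_mem _ hS')) ⟨z, hzD⟩).1
        (h ⟨z, hzD⟩ ((restrict_roleI I D hD S (y, ⟨z, hzD⟩)).2 hz))
    · intro h z hz
      exact (ihc (fun S' hS' => hcl S' (Set.mem_insert_of_mem _ hS')) z).2
        (h z.val ((restrict_roleI I D hD S (y, z)).1 hz))
  | atLeast n S c ihc =>
    simp only [Interp.conceptI, Set.mem_setOf_eq]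
    have himg : (fun z : ↥D => (z : I.Dom)) ''
        {z | (y, z) ∈ (I.restrict D hD).roleI S ∧ z ∈ (I.restrict D hD).conceptI c}
        = {z | ((y : I.Dom), z) ∈ I.roleI S ∧ z ∈ I.conceptI c} := by
      ext z
      constructor
      · rintro ⟨w, ⟨h1, h2⟩, rfl⟩
        exact ⟨(restrict_roleI I D hD S (y, w)).1 h1,
          (ihc (fun S' hS' => hcl S' (Set.mem_insert_of_mem _ hS')) w).1 h2⟩
      · rintro ⟨h1, h2⟩
        have hzD : z ∈ D := hcl S (Set.mem_insert _ _) (y : I.Dom) y.2 z h1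
        exact ⟨⟨z, hzD⟩, ⟨(restrict_roleI I D hD S (y, ⟨z, hzD⟩)).2 h1,
          (ihc (fun S' hS' => hcl S' (Set.mem_insert_of_mem _ hS')) ⟨z, hzD⟩).2 h2⟩, rfl⟩
    rw [← himg, Set.InjOn.encard_image (Subtype.val_injective.injOn)]
    exact Iff.rfl
  | atMost n S c ihc =>
    simp only [Interp.conceptI, Set.mem_setOf_eq]
    have himg : (fun z : ↥D => (z : I.Dom)) ''
        {z | (y, z) ∈ (I.restrict D hD).roleI S ∧ z ∈ (I.restrict D hD).conceptI c}
        = {z | ((y : I.Dom), z) ∈ I.roleI S ∧ z ∈ I.conceptI c} := by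
      ext z
      constructor
      · rintro ⟨w, ⟨h1, h2⟩, rfl⟩
        exact ⟨(restrict_roleI I D hD S (y, w)).1 h1,
          (ihc (fun S' hS' => hcl S' (Set.mem_insert_of_mem _ hS')) w).1 h2⟩
      · rintro ⟨h1, h2⟩
        have hzD : z ∈ D := hcl S (Set.mem_insert _ _) (y : I.Dom) y.2 z h1
        exact ⟨⟨z, hzD⟩, ⟨(restrict_roleI I D hD S (y, ⟨z, hzD⟩)).2 h1,
          (ihc (fun S' hS' => hcl S' (Set.mem_insert_of_mem _ hS')) ⟨z, hzD⟩).2 h2⟩, rfl⟩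
    rw [← himg, Set.InjOn.encard_image (Subtype.val_injective.injOn)]
    exact Iff.rfl

/-- subsumption internalisation. `d` subsumes `c` w.r.t. terminology `T`
and role hierarchy `H` iff `c ⊓ ¬d ⊓ C_T ⊓ ∀U.C_T` is unsatisfiable w.r.t. `R_U`. -/
theorem internalisation_subsumption {Cn Rn : Type} (a : Cn) (Rp : Set Rn)
    (T : Terminology Cn Rn) (H : RoleHierarchy Rn) (c d : Concept Cn Rn) (u : Rn)
    (roles : Set (SRole Rn))
    (hroles : roles = c.rolesOf ∪ d.rolesOf ∪ Terminology.rolesOf T ∪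
      RoleHierarchy.rolesOf H)
    (hfresh : ∀ S ∈ roles, S.base ≠ u) (hfreshRp : u ∉ Rp) :
    (∀ I : Interp Cn Rn, I.respectsTrans Rp → I.modelsT T → I.modelsH H →
        I.conceptI c ⊆ I.conceptI d) ↔
    ¬ (∃ I : Interp Cn Rn, I.respectsTrans (insert u Rp) ∧ I.modelsH (addU H roles u) ∧
        (I.conceptI (.conj c (.conj (.neg d) (.conj (CT a T)
          (.all (SRole.name u) (CT a T)))))).Nonempty) := by
  have hrc : c.rolesOf ⊆ roles := by
    subst hroles; intro S h; exact Or.inl (Or.inl (Or.inl h))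
  have hrd : d.rolesOf ⊆ roles := by
    subst hroles; intro S h; exact Or.inl (Or.inl (Or.inr h))
  have hrT : Terminology.rolesOf T ⊆ roles := by
    subst hroles; intro S h; exact Or.inl (Or.inr h)
  have hrH : RoleHierarchy.rolesOf H ⊆ roles := by
    subst hroles; intro S h; exact Or.inr h
  have hrCT : (CT a T : Concept Cn Rn).rolesOf ⊆ roles :=
    fun S hS => hrT (rolesOf_CT a T hS)
  constructor
  · -- forward: subsumption implies unsatisfiability
    rintro hsub ⟨I, htr, hH, x, hx⟩
    simp only [Interp.conceptI, Set.mem_inter_iff, Set.mem_compl_iff,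
      Set.mem_setOf_eq] at hx
    obtain ⟨hxc, hxd, hxCT, hxall⟩ := hx
    set D : Set I.Dom := insert x {y | (x, y) ∈ I.rI u} with hDdef
    have hxD : x ∈ D := Set.mem_insert _ _
    have hsubU : ∀ S ∈ roles, I.roleI S ⊆ I.rI u := by
      intro S hS
      exact hH (S, SRole.name u) (Or.inr ⟨S, hS, Or.inl rfl⟩)
    have hutr := htr u (Set.mem_insert _ _)
    have hcl : ∀ S ∈ roles, ∀ y ∈ D, ∀ z, (y, z) ∈ I.roleI S → z ∈ D := by
      intro S hS y hy z hz
      have hzu : (y, z) ∈ I.rI u := hsubU S hS hz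
      rcases hy with rfl | hy
      · exact Or.inr hzu
      · exact Or.inr (hutr x y z hy hzu)
    have hCTD : ∀ y ∈ D, y ∈ I.conceptI (CT a T) := by
      intro y hy
      rcases hy with rfl | hy
      · exact hxCT
      · exact hxall y hy
    set J := I.restrict D ⟨x, hxD⟩ with hJdef
    have hJtr : J.respectsTrans Rp := by
      intro r hr p q s h1 h2
      exact htr r (Set.mem_insert_of_mem _ hr) p.val q.val s.val h1 h2
    have hJT : J.modelsT T := by
      intro p hp y hy
      have hclp1 : ∀ S ∈ p.1.rolesOf, ∀ y ∈ D, ∀ z, (y, z) ∈ I.roleI S → z ∈ D :=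
        fun S hS => hcl S (hrT ⟨p, hp, Or.inl hS⟩)
      have hclp2 : ∀ S ∈ p.2.rolesOf, ∀ y ∈ D, ∀ z, (y, z) ∈ I.roleI S → z ∈ D :=
        fun S hS => hcl S (hrT ⟨p, hp, Or.inr hS⟩)
      have h1 : y.val ∈ I.conceptI p.1 :=
        (restrict_conceptI I D ⟨x, hxD⟩ p.1 hclp1 y).1 hy
      have h2 : y.val ∈ I.conceptI p.2 :=
        (mem_gci I p _).1 ((mem_CT I a T _).1 (hCTD y.val y.2) p hp) h1
      exact (restrict_conceptI I D ⟨x, hxD⟩ p.2 hclp2 y).2 h2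
    have hJH : J.modelsH H := by
      intro p hp q hq
      exact (restrict_roleI I D ⟨x, hxD⟩ p.2 q).2
        (hH p (Or.inl hp) ((restrict_roleI I D ⟨x, hxD⟩ p.1 q).1 hq))
    have hclc : ∀ S ∈ c.rolesOf, ∀ y ∈ D, ∀ z, (y, z) ∈ I.roleI S → z ∈ D :=
      fun S hS => hcl S (hrc hS)
    have hcld : ∀ S ∈ d.rolesOf, ∀ y ∈ D, ∀ z, (y, z) ∈ I.roleI S → z ∈ D :=
      fun S hS => hcl S (hrd hS)
    have hxc' : (⟨x, hxD⟩ : ↥D) ∈ J.conceptI c :=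
      (restrict_conceptI I D ⟨x, hxD⟩ c hclc ⟨x, hxD⟩).2 hxc
    have := hsub J hJtr hJT hJH hxc'
    exact hxd ((restrict_conceptI I D ⟨x, hxD⟩ d hcld ⟨x, hxD⟩).1 this)
  · -- backward: unsatisfiability implies subsumption
    intro hunsat I htr hT hHI
    by_contra hnc
    rw [Set.not_subset] at hnc
    obtain ⟨x, hxc, hxd⟩ := hnc
    classical
    apply hunsat
    set f : Rn → Set (I.Dom × I.Dom) := fun r => if r = u then Set.univ else I.rI r
      with hf
    have hfeq : ∀ S ∈ roles, f S.base = I.rI S.base := by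
      intro S hS
      simp only [hf, if_neg (hfresh S hS)]
    refine ⟨{ I with rI := f }, ?_, ?_, ?_⟩
    · intro r hr p q s h1 h2
      rcases hr with rfl | hr
      · show (p, s) ∈ f r
        simp [hf]
      · have hru : r ≠ u := fun h => hfreshRp (h ▸ hr)
        have : ({ I with rI := f } : Interp Cn Rn).rI r = I.rI r := by
          simp only [hf, if_neg hru]
        rw [this] at h1 h2 ⊢
        exact htr r hr p q s h1 h2
    · intro p hp
      rcases hp with hp | ⟨S, hS, hps | hps⟩
      · rw [roleI_override I f p.1 (hfeq p.1 (hrH ⟨p, hp, Or.inl rfl⟩)),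
          roleI_override I f p.2 (hfeq p.2 (hrH ⟨p, hp, Or.inr rfl⟩))]
        exact hHI p hp
      · subst hps
        intro q _
        show q ∈ f u
        simp [hf]
      · subst hps
        intro q _
        show q ∈ f u
        simp [hf]
    · refine ⟨x, ?_⟩
      have hallCT : ∀ y : I.Dom, y ∈ I.conceptI (CT a T) := by
        intro y
        rw [mem_CT]
        intro p hp
        rw [mem_gci]
        exact fun h => hT p hp h
      simp only [Interp.conceptI, Set.mem_inter_iff, Set.mem_compl_iff,
        Set.mem_setOf_eq]
      refine ⟨?_, ?_, ?_, ?_⟩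
      · rw [conceptI_override I f c (fun S hS => hfeq S (hrc hS))]
        exact hxc
      · rw [conceptI_override I f d (fun S hS => hfeq S (hrd hS))]
        exact hxd
      · rw [conceptI_override I f (CT a T) (fun S hS => hfeq S (hrCT hS))]
        exact hallCT x
      · intro y _
        rw [conceptI_override I f (CT a T) (fun S hS => hfeq S (hrCT hS))]
        exact hallCT y

end SHIQ
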